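/- Let X be a measurable space, D a probability measure on X, f : X → {−1,1} a measurable target function, and H a countable class of measurable functions h : X → {−1,1} whose VC dimension is a finite number d ≥ 1. Let η > 0 and m ≥ d. Draw a sample S = (x_1,…,x_m) i.i.d. according to D, and label y_i = f(x_i). Then the probability (over S ∼ D^m) that there exists h ∈ H with err(h,f,D) > êrr(h,S) + η is at most 8·(e·m/d)^d · exp(−m·η²/32). -/

import Mathlib

open MeasureTheory

/-- A finite set `S` of points is shattered by a class `F` of `±1`-valued
functions if every `±1`-labeling of `S` is realized by some member of `F`. -/
def Shatters {X : Type*} (F : Set (X → ℝ)) (S : Finset X) : Prop :=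
  ∀ ℓ : X → ℝ, (∀ a ∈ S, ℓ a = 1 ∨ ℓ a = -1) → ∃ h ∈ F, ∀ a ∈ S, h a = ℓ a

open Finset Real
open scoped ENNReal

lemma binom_sum_le (d n : ℕ) (hd : 1 ≤ d) (hdn : d ≤ n) :
    ((∑ k ∈ Finset.Iic d, n.choose k : ℕ) : ℝ) ≤ (Real.exp 1 * n / d) ^ d := by
  have hn1 : 1 ≤ n := hd.trans hdn
  have hn0 : (0:ℝ) < n := by exact_mod_cast hn1
  have hd0 : (0:ℝ) < d := by exact_mod_cast hd
  set r : ℝ := d / n with hr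
  have hr0 : 0 < r := by positivity
  have hr1 : r ≤ 1 := by rw [hr, div_le_one hn0]; exact_mod_cast hdn
  have key : r ^ d * ((∑ k ∈ Finset.Iic d, n.choose k : ℕ) : ℝ) ≤ Real.exp d := by
    have h1 : r ^ d * ((∑ k ∈ Finset.Iic d, n.choose k : ℕ) : ℝ)
        ≤ ∑ k ∈ Finset.Iic d, (n.choose k : ℝ) * r ^ k := by
      push_cast
      rw [Finset.mul_sum]
      refine Finset.sum_le_sum fun k hk => ?_
      rw [mul_comm]
      have : r ^ d ≤ r ^ k :=
        pow_le_pow_of_le_one hr0.le hr1 (Finset.mem_Iic.mp hk)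
      have hnk : (0:ℝ) ≤ (n.choose k : ℝ) := by positivity
      nlinarith
    have h2 : ∑ k ∈ Finset.Iic d, (n.choose k : ℝ) * r ^ k
        ≤ ∑ k ∈ Finset.range (n+1), (n.choose k : ℝ) * r ^ k := by
      apply Finset.sum_le_sum_of_subset_of_nonneg
      · intro k hk
        simp only [Finset.mem_Iic, Finset.mem_range] at *
        omega
      · intro k _ _; positivity
    have h3 : ∑ k ∈ Finset.range (n+1), (n.choose k : ℝ) * r ^ k = (1 + r) ^ n := by
      rw [add_comm 1 r, add_pow]
      apply Finset.sum_congr rfl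
      intro k _
      rw [one_pow]; ring
    have h4 : (1 + r) ^ n ≤ Real.exp d := by
      have hre : 1 + r ≤ Real.exp r := by
        have := Real.add_one_le_exp r; linarith
      calc (1 + r) ^ n ≤ Real.exp r ^ n :=
            pow_le_pow_left₀ (by positivity) hre n
        _ = Real.exp (r * n) := by
            rw [← Real.exp_nat_mul]; ring_nf
        _ = Real.exp d := by
            congr 1; rw [hr]; field_simp
    linarith
  have hmain : ((∑ k ∈ Finset.Iic d, n.choose k : ℕ) : ℝ) ≤ Real.exp d / r ^ d := by
    rw [le_div_iff₀ (by positivity)]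
    linarith [key]
  refine hmain.trans (le_of_eq ?_)
  have hed : Real.exp (d:ℝ) = Real.exp 1 ^ d := by
    rw [← Real.exp_nat_mul]; norm_num
  rw [hed, mul_div_assoc, mul_pow, div_eq_mul_inv, ← inv_pow]
  congr 1
  rw [hr]
  simp [div_div_eq_mul_div, inv_div]

set_option maxHeartbeats 1000000 in

lemma hoeffding_count (m : ℕ) (hm : 1 ≤ m) (c : Fin m → ℝ) (hc : ∀ i, |c i| ≤ 1)
    (t : ℝ) (ht : 0 ≤ t) :
    ((Finset.univ.filter
        fun ε : Fin m → Bool => t ≤ ∑ i, (if ε i then c i else -c i)).card : ℝ)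
      ≤ 2 ^ m * Real.exp (-(t ^ 2) / (2 * m)) := by
  have hm0 : (0:ℝ) < m := by exact_mod_cast hm
  set lam : ℝ := t / m with hlam
  have hlam0 : 0 ≤ lam := by positivity
  set S : (Fin m → Bool) → ℝ := fun ε => ∑ i, (if ε i then c i else -c i) with hS
  have h1 : ((Finset.univ.filter fun ε : Fin m → Bool => t ≤ S ε).card : ℝ)
      * Real.exp (lam * t) ≤ ∑ ε : Fin m → Bool, Real.exp (lam * S ε) := by
    calc ((Finset.univ.filter fun ε : Fin m → Bool => t ≤ S ε).card : ℝ)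
          * Real.exp (lam * t)
        = ∑ _ε ∈ Finset.univ.filter fun ε : Fin m → Bool => t ≤ S ε,
            Real.exp (lam * t) := by
          rw [Finset.sum_const, nsmul_eq_mul]
      _ ≤ ∑ ε ∈ Finset.univ.filter fun ε : Fin m → Bool => t ≤ S ε,
            Real.exp (lam * S ε) := by
          refine Finset.sum_le_sum fun ε hε => ?_
          have := (Finset.mem_filter.mp hε).2
          exact Real.exp_le_exp.mpr (by nlinarith)
      _ ≤ ∑ ε : Fin m → Bool, Real.exp (lam * S ε) := by
          refine Finset.sum_le_sum_of_subset_of_nonneg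
            (Finset.filter_subset _ _) fun ε _ _ => ?_
          positivity
  have h2 : ∑ ε : Fin m → Bool, Real.exp (lam * S ε)
      = ∏ i : Fin m, (Real.exp (lam * c i) + Real.exp (lam * -c i)) := by
    have : ∀ ε : Fin m → Bool, Real.exp (lam * S ε)
        = ∏ i : Fin m, Real.exp (lam * (if ε i then c i else -c i)) := by
      intro ε
      rw [← Real.exp_sum, hS, Finset.mul_sum]
    simp_rw [this]
    calc ∑ ε : Fin m → Bool, ∏ i, Real.exp (lam * if ε i then c i else -c i)
        = ∑ ε ∈ Fintype.piFinset (fun _ : Fin m => (Finset.univ : Finset Bool)),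
            ∏ i, Real.exp (lam * if ε i then c i else -c i) := by
          rw [Fintype.piFinset_univ]
      _ = ∏ i : Fin m, ∑ b : Bool, Real.exp (lam * if b then c i else -c i) :=
          (Finset.prod_univ_sum (fun _ => (Finset.univ : Finset Bool))
            (fun i b => Real.exp (lam * if b then c i else -c i))).symm
      _ = ∏ i : Fin m, (Real.exp (lam * c i) + Real.exp (lam * -c i)) := by
          refine Finset.prod_congr rfl fun i _ => ?_
          rw [Fintype.sum_bool]
          simp
  have h3 : ∀ i : Fin m, Real.exp (lam * c i) + Real.exp (lam * -c i)
      ≤ 2 * Real.exp (lam ^ 2 / 2) := by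
    intro i
    have hch : Real.exp (lam * c i) + Real.exp (lam * -c i)
        = 2 * Real.cosh (lam * c i) := by
      rw [Real.cosh_eq]; ring_nf
    rw [hch]
    have h4 := Real.cosh_le_exp_half_sq (lam * c i)
    have h5 : Real.exp ((lam * c i) ^ 2 / 2) ≤ Real.exp (lam ^ 2 / 2) := by
      apply Real.exp_le_exp.mpr
      have := hc i
      have h6 : (c i) ^ 2 ≤ 1 := by nlinarith [abs_nonneg (c i), sq_abs (c i)]
      nlinarith [sq_nonneg lam]
    nlinarith [Real.cosh_pos (lam * c i)]
  have h7 : ∑ ε : Fin m → Bool, Real.exp (lam * S ε)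
      ≤ 2 ^ m * Real.exp ((m:ℝ) * lam ^ 2 / 2) := by
    rw [h2]
    calc ∏ i : Fin m, (Real.exp (lam * c i) + Real.exp (lam * -c i))
        ≤ ∏ _i : Fin m, (2 * Real.exp (lam ^ 2 / 2)) := by
          apply Finset.prod_le_prod
          · intro i _; positivity
          · intro i _; exact h3 i
      _ = 2 ^ m * Real.exp ((m:ℝ) * lam ^ 2 / 2) := by
          rw [Finset.prod_const, Finset.card_univ, Fintype.card_fin, mul_pow,
            ← Real.exp_nat_mul]
          ring_nf
  have h8 : ((Finset.univ.filter fun ε : Fin m → Bool => t ≤ S ε).card : ℝ)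
      ≤ 2 ^ m * Real.exp ((m:ℝ) * lam ^ 2 / 2 - lam * t) := by
    rw [Real.exp_sub, ← mul_div_assoc, le_div_iff₀ (Real.exp_pos _)]
    exact h1.trans h7
  have h9 : (m:ℝ) * lam ^ 2 / 2 - lam * t = -(t ^ 2) / (2 * m) := by
    rw [hlam]; field_simp; ring
  rw [← h9]
  exact h8

open Classical in
lemma pattern_card_le {X : Type*} (f : X → ℝ) (hfval : ∀ z, f z = 1 ∨ f z = -1)
    (H : Set (X → ℝ)) (hHval : ∀ h ∈ H, ∀ z, h z = 1 ∨ h z = -1)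
    (d : ℕ) (hVCle : ∀ S : Finset X, Shatters H S → S.card ≤ d)
    {ι : Type*} [Fintype ι] (ω : ι → X) :
    ((Set.toFinite {s : Finset ι | ∃ h ∈ H,
        s = Finset.univ.filter fun i => h (ω i) ≠ f (ω i)}).toFinset).card
      ≤ ∑ k ∈ Finset.Iic d, (Fintype.card ι).choose k := by
  classical
  set 𝒜 : Finset (Finset ι) :=
    (Set.toFinite {s : Finset ι | ∃ h ∈ H,
        s = Finset.univ.filter fun i => h (ω i) ≠ f (ω i)}).toFinset with h𝒜
  have hmem : ∀ u : Finset ι, u ∈ 𝒜 ↔ ∃ h ∈ H,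
      u = Finset.univ.filter fun i => h (ω i) ≠ f (ω i) := by
    intro u; rw [h𝒜, Set.Finite.mem_toFinset]; rfl
  -- every set shattered by 𝒜 has card ≤ d
  have hshat : ∀ s : Finset ι, 𝒜.Shatters s → s.card ≤ d := by
    intro s hs
    -- ω is injective on s
    have hinj : Set.InjOn ω s := by
      intro i hi j hj hij
      by_contra hne
      obtain ⟨u, hu, hsu⟩ := hs (t := {i}) (Finset.singleton_subset_iff.mpr hi)
      obtain ⟨h, hH, rfl⟩ := (hmem u).mp hu
      have hiu : i ∈ Finset.univ.filter fun i => h (ω i) ≠ f (ω i) := by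
        have : i ∈ ({i} : Finset ι) := Finset.mem_singleton_self i
        rw [← hsu] at this
        exact (Finset.mem_inter.mp this).2
      have hju : j ∉ Finset.univ.filter fun i => h (ω i) ≠ f (ω i) := by
        intro hju
        have : j ∈ s ∩ (Finset.univ.filter fun i => h (ω i) ≠ f (ω i)) :=
          Finset.mem_inter.mpr ⟨hj, hju⟩
        rw [hsu, Finset.mem_singleton] at this
        exact hne this.symm
      rw [Finset.mem_filter] at hiu
      rw [Finset.mem_filter] at hju
      rw [hij] at hiu
      exact hju ⟨Finset.mem_univ j, hiu.2⟩
    set S : Finset X := s.image ω with hS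
    have hcard : S.card = s.card := Finset.card_image_of_injOn hinj
    have hSsh : Shatters H S := by
      intro ℓ hℓ
      set t : Finset ι := s.filter (fun i => ℓ (ω i) ≠ f (ω i)) with ht
      obtain ⟨u, hu, hsu⟩ := hs (t := t) (Finset.filter_subset _ _)
      obtain ⟨h, hH, rfl⟩ := (hmem u).mp hu
      refine ⟨h, hH, ?_⟩
      intro a ha
      obtain ⟨i, hi, rfl⟩ := Finset.mem_image.mp ha
      have hiff : (h (ω i) ≠ f (ω i)) ↔ (ℓ (ω i) ≠ f (ω i)) := by
        constructor
        · intro hne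
          have : i ∈ s ∩ (Finset.univ.filter fun i => h (ω i) ≠ f (ω i)) :=
            Finset.mem_inter.mpr ⟨hi, Finset.mem_filter.mpr ⟨Finset.mem_univ i, hne⟩⟩
          rw [hsu, ht, Finset.mem_filter] at this
          exact this.2
        · intro hne
          have : i ∈ t := by rw [ht, Finset.mem_filter]; exact ⟨hi, hne⟩
          rw [← hsu, Finset.mem_inter, Finset.mem_filter] at this
          exact this.2.2
      have hhv := hHval h hH (ω i)
      have hfv := hfval (ω i)
      have hlv := hℓ (ω i) (Finset.mem_image.mpr ⟨i, hi, rfl⟩)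
      by_cases heq : h (ω i) = f (ω i)
      · have : ¬ (ℓ (ω i) ≠ f (ω i)) := fun hc => (hiff.mpr hc) heq
        push_neg at this
        rw [heq, this]
      · have hlne : ℓ (ω i) ≠ f (ω i) := hiff.mp heq
        rcases hfv with hf1 | hf1 <;> rw [hf1] at heq hlne <;>
          rcases hhv with hh1 | hh1 <;> rcases hlv with hl1 | hl1 <;>
          first
            | (exact absurd hh1 heq)
            | (exact absurd hl1 hlne)
            | (rw [hh1, hl1])
    calc s.card = S.card := hcard.symm
      _ ≤ d := hVCle S hSsh
  have hvc : 𝒜.vcDim ≤ d := by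
    apply Finset.sup_le
    intro s hsin
    exact hshat s (Finset.mem_shatterer.mp hsin)
  calc 𝒜.card ≤ 𝒜.shatterer.card := Finset.card_le_card_shatterer 𝒜
    _ ≤ ∑ k ∈ Finset.Iic 𝒜.vcDim, (Fintype.card ι).choose k :=
        Finset.card_shatterer_le_sum_vcDim
    _ ≤ ∑ k ∈ Finset.Iic d, (Fintype.card ι).choose k := by
        apply Finset.sum_le_sum_of_subset
        exact Finset.Iic_subset_Iic.mpr hvc

section
variable {XX : Type*} [MeasurableSpace XX]
end

section
variable {X : Type*} [MeasurableSpace X]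

/-- Integral of a product of coordinate functions over a finite product of
copies of a probability measure. -/
lemma integral_pi_prod (D : Measure X) [SigmaFinite D] (m : ℕ) (F : Fin m → X → ℝ) :
    ∫ ω : Fin m → X, ∏ k, F k (ω k) ∂(Measure.pi fun _ : Fin m => D)
      = ∏ k, ∫ x, F k x ∂D := by
  letI : MeasureSpace X := ⟨D⟩
  have h1 : (Measure.pi fun _ : Fin m => D) = (volume : Measure (Fin m → X)) := by
    rw [volume_pi]; rfl
  rw [h1]
  exact MeasureTheory.integral_fintype_prod_eq_prod F

open scoped Classical in
lemma chebyshev_count (D : Measure X) [IsProbabilityMeasure D]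
    (E : Set X) (hE : MeasurableSet E) (m : ℕ) (t : ℝ) (ht : 0 < t) :
    ((Measure.pi fun _ : Fin m => D) {ω : Fin m → X |
        ((Finset.univ.filter fun i => ω i ∈ E).card : ℝ) + t ≤ (m : ℝ) * (D E).toReal}).toReal
      ≤ (m : ℝ) / (4 * t ^ 2) := by
  classical
  set μ := (Measure.pi fun _ : Fin m => D) with hμ
  haveI : IsProbabilityMeasure μ := by rw [hμ]; infer_instance
  set p : ℝ := (D E).toReal with hp
  have hp0 : 0 ≤ p := ENNReal.toReal_nonneg
  have hp1 : p ≤ 1 := by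
    rw [hp]
    exact ENNReal.toReal_le_of_le_ofReal zero_le_one (by simpa using prob_le_one (μ := D) (s := E))
  set g : X → ℝ := fun x => (if x ∈ E then (1:ℝ) else 0) - p with hg
  have hgmeas : Measurable g := by
    apply Measurable.sub _ measurable_const
    exact Measurable.ite hE measurable_const measurable_const
  have hgbd : ∀ x, |g x| ≤ 1 := by
    intro x
    rw [hg]
    by_cases hx : x ∈ E <;> simp [hx, abs_le] <;> constructor <;> linarith
  -- integrals of g and g^2
  have hχ : ∫ x, (if x ∈ E then (1:ℝ) else 0) ∂D = p := by
    have : (fun x => if x ∈ E then (1:ℝ) else 0) = E.indicator (fun _ => (1:ℝ)) := by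
      ext x; by_cases hx : x ∈ E <;> simp [hx]
    rw [this, MeasureTheory.integral_indicator_const _ hE]
    simp [hp, measureReal_def]
  have hχint : Integrable (fun x => if x ∈ E then (1:ℝ) else 0) D := by
    refine Integrable.mono' (integrable_const 1)
      ((Measurable.ite hE measurable_const measurable_const).aestronglyMeasurable) ?_
    filter_upwards with x
    by_cases hx : x ∈ E <;> simp [hx]
  have hgint : Integrable g D := by
    rw [hg]; exact hχint.sub (integrable_const p)
  have hintg : ∫ x, g x ∂D = 0 := by
    rw [hg, integral_sub hχint (integrable_const p), hχ, integral_const]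
    simp
  have hgsq : ∀ x, g x ^ 2 = (1 - 2 * p) * (if x ∈ E then (1:ℝ) else 0) + p ^ 2 := by
    intro x
    rw [hg]
    by_cases hx : x ∈ E <;> simp [hx] <;> ring
  have hintg2 : ∫ x, g x ^ 2 ∂D = p - p ^ 2 := by
    simp_rw [hgsq]
    rw [integral_add (hχint.const_mul _) (integrable_const _), MeasureTheory.integral_const_mul, hχ,
      integral_const]
    simp
    ring
  -- Z and its square integral
  set Z : (Fin m → X) → ℝ := fun ω => ∑ i, g (ω i) with hZ
  have hZmeas : Measurable Z := by
    apply Finset.measurable_sum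
    intro i _
    exact hgmeas.comp (measurable_pi_apply i)
  have hterm_int : ∀ i j : Fin m, Integrable (fun ω : Fin m → X => g (ω i) * g (ω j)) μ := by
    intro i j
    refine Integrable.mono' (integrable_const 1)
      ((hgmeas.comp (measurable_pi_apply i)).mul
        (hgmeas.comp (measurable_pi_apply j))).aestronglyMeasurable ?_
    filter_upwards with ω
    simp only [norm_mul, Real.norm_eq_abs]
    calc |g (ω i)| * |g (ω j)| ≤ 1 * 1 := by
          exact mul_le_mul (hgbd _) (hgbd _) (abs_nonneg _) zero_le_one
      _ = 1 := one_mul 1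
  have hterm : ∀ i j : Fin m, (∫ ω, g (ω i) * g (ω j) ∂μ)
      = if i = j then p - p ^ 2 else 0 := by
    intro i j
    by_cases hij : i = j
    · subst hij
      simp only [if_pos rfl]
      set F : Fin m → X → ℝ := fun k => if k = i then (fun x => g x ^ 2) else fun _ => 1
        with hF
      have heq : ∀ ω : Fin m → X, g (ω i) * g (ω i) = ∏ k, F k (ω k) := by
        intro ω
        rw [Finset.prod_eq_single i]
        · simp [hF, sq]
        · intro k _ hk; simp [hF, hk]
        · intro h; exact absurd (Finset.mem_univ i) h
      simp_rw [heq]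
      rw [integral_pi_prod]
      rw [Finset.prod_eq_single i]
      · simp only [hF, if_pos rfl]; exact hintg2
      · intro k _ hk; simp [hF, hk]
      · intro h; exact absurd (Finset.mem_univ i) h
    · simp only [if_neg hij]
      set F : Fin m → X → ℝ := fun k => if k = i then g else if k = j then g
        else fun _ => 1 with hF
      have heq : ∀ ω : Fin m → X, g (ω i) * g (ω j) = ∏ k, F k (ω k) := by
        intro ω
        rw [← Finset.mul_prod_erase Finset.univ (fun k => F k (ω k)) (Finset.mem_univ i),
          ← Finset.mul_prod_erase _ (fun k => F k (ω k))
            (Finset.mem_erase.mpr ⟨Ne.symm hij, Finset.mem_univ j⟩),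
          Finset.prod_eq_one]
        · simp [hF, Ne.symm hij]
        · intro k hk
          have hk1 := (Finset.mem_erase.mp hk).1
          have hk2 := (Finset.mem_erase.mp (Finset.mem_erase.mp hk).2).1
          simp [hF, hk1, hk2]
      simp_rw [heq]
      rw [integral_pi_prod]
      apply Finset.prod_eq_zero (Finset.mem_univ i)
      simp only [hF, if_pos rfl]
      exact hintg
  have hZsq_int : Integrable (fun ω => Z ω ^ 2) μ := by
    have : (fun ω => Z ω ^ 2) = fun ω => ∑ i, ∑ j, g (ω i) * g (ω j) := by
      ext ω
      rw [hZ, sq, Finset.sum_mul_sum]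
    rw [this]
    exact integrable_finset_sum _ fun i _ => integrable_finset_sum _ fun j _ => hterm_int i j
  have hintZ2 : ∫ ω, Z ω ^ 2 ∂μ = (m : ℝ) * (p - p ^ 2) := by
    have : (fun ω => Z ω ^ 2) = fun ω => ∑ i, ∑ j, g (ω i) * g (ω j) := by
      ext ω
      rw [hZ, sq, Finset.sum_mul_sum]
    rw [this, integral_finset_sum _ fun i _ =>
      integrable_finset_sum _ fun j _ => hterm_int i j]
    have : ∀ i : Fin m, ∫ ω, (∑ j, g (ω i) * g (ω j)) ∂μ = p - p ^ 2 := by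
      intro i
      rw [integral_finset_sum _ fun j _ => hterm_int i j]
      simp_rw [hterm i]
      rw [Finset.sum_ite_eq]
      simp
    simp_rw [this]
    rw [Finset.sum_const]
    simp [mul_comm]
  -- Markov
  have hsub : {ω : Fin m → X |
      ((Finset.univ.filter fun i => ω i ∈ E).card : ℝ) + t ≤ (m : ℝ) * p}
      ⊆ {ω : Fin m → X | t ^ 2 ≤ Z ω ^ 2} := by
    intro ω hω
    simp only [Set.mem_setOf_eq] at hω ⊢
    have hcnt : ((Finset.univ.filter fun i => ω i ∈ E).card : ℝ)
        = ∑ i, (if ω i ∈ E then (1:ℝ) else 0) := by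
      rw [Finset.card_filter]
      push_cast
      rfl
    have hZω : Z ω = ((Finset.univ.filter fun i => ω i ∈ E).card : ℝ) - m * p := by
      rw [hZ, hcnt]
      simp only [hg]
      rw [Finset.sum_sub_distrib, Finset.sum_const]
      simp [mul_comm]
    have h1 : Z ω ≤ -t := by rw [hZω]; linarith
    nlinarith
  have hmarkov := MeasureTheory.mul_meas_ge_le_integral_of_nonneg
    (μ := μ) (f := fun ω => Z ω ^ 2)
    (Filter.Eventually.of_forall fun ω => sq_nonneg _) hZsq_int (t ^ 2)
  have hμmono : (μ {ω : Fin m → X |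
      ((Finset.univ.filter fun i => ω i ∈ E).card : ℝ) + t ≤ (m : ℝ) * p}).toReal
      ≤ (μ {ω : Fin m → X | t ^ 2 ≤ Z ω ^ 2}).toReal := by
    apply ENNReal.toReal_mono (measure_ne_top μ _)
    exact measure_mono hsub
  have ht2 : (0:ℝ) < t ^ 2 := by positivity
  have hfin : (μ {ω : Fin m → X | t ^ 2 ≤ Z ω ^ 2}).toReal ≤ (m : ℝ) / (4 * t ^ 2) := by
    rw [le_div_iff₀ (by positivity)]
    have hb : (m : ℝ) * (p - p ^ 2) ≤ (m : ℝ) / 4 := by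
      have : p - p ^ 2 ≤ 1 / 4 := by nlinarith [sq_nonneg (p - 1/2)]
      have hm0 : (0:ℝ) ≤ m := Nat.cast_nonneg m
      calc (m:ℝ) * (p - p^2) ≤ (m:ℝ) * (1/4) := by
            apply mul_le_mul_of_nonneg_left this hm0
        _ = (m:ℝ)/4 := by ring
    calc (μ {ω : Fin m → X | t ^ 2 ≤ Z ω ^ 2}).toReal * (4 * t ^ 2)
        = (t ^ 2 * (μ {ω : Fin m → X | t ^ 2 ≤ Z ω ^ 2}).toReal) * 4 := by ring
      _ ≤ (∫ ω, Z ω ^ 2 ∂μ) * 4 := by rw [measureReal_def] at hmarkov; nlinarith [hmarkov]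
      _ = ((m : ℝ) * (p - p ^ 2)) * 4 := by rw [hintZ2]
      _ ≤ ((m : ℝ) / 4) * 4 := by nlinarith [hb]
      _ = (m : ℝ) := by ring
  exact hμmono.trans hfin
end

section
variable {X : Type*} [MeasurableSpace X]

set_option maxHeartbeats 1000000 in
lemma swap_bound (D : Measure X) [IsProbabilityMeasure D]
    (f : X → ℝ) (hf : Measurable f) (hfval : ∀ z, f z = 1 ∨ f z = -1)
    (H : Set (X → ℝ)) (hHcount : H.Countable)
    (hHmeas : ∀ h ∈ H, Measurable h)
    (hHval : ∀ h ∈ H, ∀ z, h z = 1 ∨ h z = -1)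
    (d : ℕ) (hVCle : ∀ S : Finset X, Shatters H S → S.card ≤ d)
    (η : ℝ) (hη : 0 < η) (m : ℕ) (hm1 : 1 ≤ m) :
    (Measure.pi fun _ : Fin m => D.prod D)
      {ζ : Fin m → X × X | ∃ h ∈ H,
        ((Finset.univ.filter fun i => h ((ζ i).1) ≠ f ((ζ i).1)).card : ℝ) / m + η / 2
          < ((Finset.univ.filter fun i => h ((ζ i).2) ≠ f ((ζ i).2)).card : ℝ) / m}
      ≤ ENNReal.ofReal (((∑ k ∈ Finset.Iic d, (2 * m).choose k : ℕ) : ℝ)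
          * Real.exp (-(m : ℝ) * η ^ 2 / 8)) := by
  classical
  set ν := (Measure.pi fun _ : Fin m => D.prod D) with hν
  haveI : IsProbabilityMeasure ν := by rw [hν]; infer_instance
  set BZ : Set (Fin m → X × X) := {ζ : Fin m → X × X | ∃ h ∈ H,
        ((Finset.univ.filter fun i => h ((ζ i).1) ≠ f ((ζ i).1)).card : ℝ) / m + η / 2
          < ((Finset.univ.filter fun i => h ((ζ i).2) ≠ f ((ζ i).2)).card : ℝ) / m}
    with hBZ
  rcases H.eq_empty_or_nonempty with hHe | hHne
  · have : BZ = ∅ := by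
      rw [hBZ]; ext ζ; simp [hHe]
    rw [this]
    simp
  have hm0 : (0:ℝ) < m := by exact_mod_cast hm1
  set Kc : ℕ := ∑ k ∈ Finset.Iic d, (2 * m).choose k with hKc
  have hEmeas : ∀ h ∈ H, MeasurableSet {z | h z ≠ f z} := by
    intro h hh
    have : {z | h z ≠ f z} = {z | h z = f z}ᶜ := by ext z; simp
    rw [this]
    exact (measurableSet_eq_fun (hHmeas h hh) hf).compl
  have hcnt1meas : ∀ h ∈ H, Measurable (fun ζ : Fin m → X × X =>
      ((Finset.univ.filter fun i => h ((ζ i).1) ≠ f ((ζ i).1)).card : ℝ)) := by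
    intro h hh
    have heq : (fun ζ : Fin m → X × X =>
        ((Finset.univ.filter fun i => h ((ζ i).1) ≠ f ((ζ i).1)).card : ℝ))
        = fun ζ => ∑ i, if h ((ζ i).1) ≠ f ((ζ i).1) then (1:ℝ) else 0 := by
      ext ζ; rw [Finset.card_filter]; push_cast; rfl
    rw [heq]
    apply Finset.measurable_sum
    intro i _
    exact Measurable.ite
      ((measurable_fst.comp (measurable_pi_apply i)) (hEmeas h hh))
      measurable_const measurable_const
  have hcnt2meas : ∀ h ∈ H, Measurable (fun ζ : Fin m → X × X =>
      ((Finset.univ.filter fun i => h ((ζ i).2) ≠ f ((ζ i).2)).card : ℝ)) := by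
    intro h hh
    have heq : (fun ζ : Fin m → X × X =>
        ((Finset.univ.filter fun i => h ((ζ i).2) ≠ f ((ζ i).2)).card : ℝ))
        = fun ζ => ∑ i, if h ((ζ i).2) ≠ f ((ζ i).2) then (1:ℝ) else 0 := by
      ext ζ; rw [Finset.card_filter]; push_cast; rfl
    rw [heq]
    apply Finset.measurable_sum
    intro i _
    exact Measurable.ite
      ((measurable_snd.comp (measurable_pi_apply i)) (hEmeas h hh))
      measurable_const measurable_const
  obtain ⟨e, he⟩ := Set.Countable.exists_eq_range hHcount hHne
  have heH : ∀ n, e n ∈ H := by intro n; rw [he]; exact Set.mem_range_self n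
  have hBZmeas : MeasurableSet BZ := by
    have : BZ = ⋃ n : ℕ, {ζ : Fin m → X × X |
        ((Finset.univ.filter fun i => e n ((ζ i).1) ≠ f ((ζ i).1)).card : ℝ) / m + η / 2
          < ((Finset.univ.filter fun i => e n ((ζ i).2) ≠ f ((ζ i).2)).card : ℝ) / m} := by
      rw [hBZ]
      ext ζ
      simp only [Set.mem_setOf_eq, Set.mem_iUnion, he, Set.mem_range]
      constructor
      · rintro ⟨h, ⟨n, rfl⟩, hcond⟩; exact ⟨n, hcond⟩
      · rintro ⟨n, hcond⟩; exact ⟨e n, ⟨n, rfl⟩, hcond⟩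
    rw [this]
    apply MeasurableSet.iUnion
    intro n
    exact measurableSet_lt
      (((hcnt1meas (e n) (heH n)).div_const _).add_const _)
      ((hcnt2meas (e n) (heH n)).div_const _)
  -- swap maps
  set T : (Fin m → Bool) → (Fin m → X × X) → (Fin m → X × X) :=
    fun ε ζ i => (fun p : X × X => if ε i then p.swap else p) (ζ i) with hT
  have hMP : ∀ ε, MeasurePreserving (T ε) ν ν := by
    intro ε
    rw [hν]
    have hco : ∀ i : Fin m, MeasurePreserving
        (fun p : X × X => if ε i then p.swap else p) (D.prod D) (D.prod D) := by
      intro i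
      by_cases hεi : ε i
      · simp only [hεi, if_true]
        exact Measure.measurePreserving_swap
      · simp only [hεi, Bool.false_eq_true, if_false]
        exact MeasurePreserving.id _
    exact measurePreserving_pi _ _ hco
  -- pointwise counting bound
  have hpoint : ∀ ζ : Fin m → X × X,
      ((Finset.univ.filter fun ε : Fin m → Bool => T ε ζ ∈ BZ).card : ℝ)
        ≤ (Kc : ℝ) * (2 ^ m * Real.exp (-(m : ℝ) * η ^ 2 / 8)) := by
    intro ζ
    set ω : Fin m × Bool → X := fun q => if q.2 then (ζ q.1).2 else (ζ q.1).1 with hω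
    set 𝒜 : Finset (Finset (Fin m × Bool)) :=
      (Set.toFinite {s : Finset (Fin m × Bool) | ∃ h ∈ H,
        s = Finset.univ.filter fun q => h (ω q) ≠ f (ω q)}).toFinset with h𝒜
    have h𝒜card : (𝒜.card : ℝ) ≤ (Kc : ℝ) := by
      have h1 := pattern_card_le f hfval H hHval d hVCle ω
      have h2 : Fintype.card (Fin m × Bool) = 2 * m := by
        simp [Fintype.card_prod, mul_comm]
      rw [h2] at h1
      exact_mod_cast h1
    set cS : Finset (Fin m × Bool) → Fin m → ℝ := fun s i =>
      (if (i, false) ∈ s then (1:ℝ) else 0) - (if (i, true) ∈ s then (1:ℝ) else 0)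
      with hcS
    have hcSbd : ∀ s i, |cS s i| ≤ 1 := by
      intro s i
      rw [hcS]
      by_cases h1 : (i, false) ∈ s <;> by_cases h2 : (i, true) ∈ s <;>
        simp [h1, h2]
    have hsub : (Finset.univ.filter fun ε : Fin m → Bool => T ε ζ ∈ BZ)
        ⊆ 𝒜.biUnion (fun s => Finset.univ.filter fun ε : Fin m → Bool =>
            (m : ℝ) * η / 2 ≤ ∑ i, (if ε i then cS s i else -(cS s i))) := by
      intro ε hε
      rw [Finset.mem_filter] at hε
      obtain ⟨-, h, hh, hcond⟩ := hε
      set s : Finset (Fin m × Bool) :=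
        Finset.univ.filter fun q => h (ω q) ≠ f (ω q) with hs
      have hsmem : s ∈ 𝒜 := by
        rw [h𝒜, Set.Finite.mem_toFinset]
        exact ⟨h, hh, rfl⟩
      apply Finset.mem_biUnion.mpr
      refine ⟨s, hsmem, Finset.mem_filter.mpr ⟨Finset.mem_univ _, ?_⟩⟩
      have hfst : ∀ i, (T ε ζ i).1 = if ε i then (ζ i).2 else (ζ i).1 := by
        intro i
        rw [hT]
        by_cases hεi : ε i <;> simp [hεi]
      have hsnd : ∀ i, (T ε ζ i).2 = if ε i then (ζ i).1 else (ζ i).2 := by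
        intro i
        rw [hT]
        by_cases hεi : ε i <;> simp [hεi]
      set u : Fin m → ℝ := fun i => if h ((ζ i).1) ≠ f ((ζ i).1) then (1:ℝ) else 0
        with hu
      set v : Fin m → ℝ := fun i => if h ((ζ i).2) ≠ f ((ζ i).2) then (1:ℝ) else 0
        with hv
      have hc1 : ((Finset.univ.filter
            fun i => h ((T ε ζ i).1) ≠ f ((T ε ζ i).1)).card : ℝ)
          = ∑ i, (if ε i then v i else u i) := by
        rw [Finset.card_filter]
        push_cast
        apply Finset.sum_congr rfl
        intro i _
        rw [hfst i]
        by_cases hεi : ε i <;> simp [hεi, hu, hv]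
      have hc2 : ((Finset.univ.filter
            fun i => h ((T ε ζ i).2) ≠ f ((T ε ζ i).2)).card : ℝ)
          = ∑ i, (if ε i then u i else v i) := by
        rw [Finset.card_filter]
        push_cast
        apply Finset.sum_congr rfl
        intro i _
        rw [hsnd i]
        by_cases hεi : ε i <;> simp [hεi, hu, hv]
      have hcScomp : ∀ i, cS s i = u i - v i := by
        intro i
        rw [hcS, hu, hv, hs]
        simp only [Finset.mem_filter, Finset.mem_univ, true_and]
        have hω1 : ω (i, false) = (ζ i).1 := by simp [hω]
        have hω2 : ω (i, true) = (ζ i).2 := by simp [hω]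
        rw [hω1, hω2]
      rw [hc1, hc2] at hcond
      have hsum : ∑ i, (if ε i then cS s i else -(cS s i))
          = (∑ i, (if ε i then u i else v i)) - (∑ i, (if ε i then v i else u i)) := by
        rw [← Finset.sum_sub_distrib]
        apply Finset.sum_congr rfl
        intro i _
        by_cases hεi : ε i <;> simp [hεi, hcScomp i] <;> ring
      rw [hsum]
      have hmul := (mul_lt_mul_iff_right₀ hm0).mpr hcond
      rw [mul_add, mul_div_cancel₀ _ (ne_of_gt hm0), mul_div_cancel₀ _ (ne_of_gt hm0)]
        at hmul
      have : (m:ℝ) * η / 2 = (m:ℝ) * (η / 2) := by ring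
      rw [this]
      linarith
    have hexp : -(((m:ℝ) * η / 2) ^ 2) / (2 * m) = -(m : ℝ) * η ^ 2 / 8 := by
      field_simp
      ring
    have hcount : ∀ s ∈ 𝒜,
        ((Finset.univ.filter fun ε : Fin m → Bool =>
            (m : ℝ) * η / 2 ≤ ∑ i, (if ε i then cS s i else -(cS s i))).card : ℝ)
          ≤ 2 ^ m * Real.exp (-(m : ℝ) * η ^ 2 / 8) := by
      intro s _
      have := hoeffding_count m hm1 (cS s) (hcSbd s) ((m:ℝ) * η / 2) (by positivity)
      rw [hexp] at this
      exact this
    calc ((Finset.univ.filter fun ε : Fin m → Bool => T ε ζ ∈ BZ).card : ℝ)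
        ≤ ((𝒜.biUnion (fun s => Finset.univ.filter fun ε : Fin m → Bool =>
            (m : ℝ) * η / 2 ≤ ∑ i, (if ε i then cS s i else -(cS s i)))).card : ℝ) := by
          exact_mod_cast Finset.card_le_card hsub
      _ ≤ ∑ s ∈ 𝒜, ((Finset.univ.filter fun ε : Fin m → Bool =>
            (m : ℝ) * η / 2 ≤ ∑ i, (if ε i then cS s i else -(cS s i))).card : ℝ) := by
          exact_mod_cast Finset.card_biUnion_le
      _ ≤ ∑ _s ∈ 𝒜, (2 ^ m * Real.exp (-(m : ℝ) * η ^ 2 / 8)) :=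
          Finset.sum_le_sum hcount
      _ = (𝒜.card : ℝ) * (2 ^ m * Real.exp (-(m : ℝ) * η ^ 2 / 8)) := by
          rw [Finset.sum_const, nsmul_eq_mul]
      _ ≤ (Kc : ℝ) * (2 ^ m * Real.exp (-(m : ℝ) * η ^ 2 / 8)) := by
          apply mul_le_mul_of_nonneg_right h𝒜card
          positivity
  -- measure computation
  have hpre : ∀ ε, ν (T ε ⁻¹' BZ) = ν BZ :=
    fun ε => (hMP ε).measure_preimage hBZmeas.nullMeasurableSet
  have hkey : (2 ^ m : ℝ≥0∞) * ν BZ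
      ≤ ENNReal.ofReal ((Kc : ℝ) * (2 ^ m * Real.exp (-(m : ℝ) * η ^ 2 / 8))) := by
    have h1 : (2 ^ m : ℝ≥0∞) * ν BZ = ∑ ε : Fin m → Bool, ν (T ε ⁻¹' BZ) := by
      simp_rw [hpre]
      rw [Finset.sum_const, Finset.card_univ]
      have : Fintype.card (Fin m → Bool) = 2 ^ m := by
        simp [Fintype.card_fun]
      rw [this, nsmul_eq_mul]
      push_cast
      ring
    have h2 : ∑ ε : Fin m → Bool, ν (T ε ⁻¹' BZ)
        = ∫⁻ ζ, (∑ ε : Fin m → Bool, (T ε ⁻¹' BZ).indicator (1 : (Fin m → X × X) → ℝ≥0∞) ζ) ∂ν := by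
      rw [MeasureTheory.lintegral_finset_sum]
      · apply Finset.sum_congr rfl
        intro ε _
        rw [MeasureTheory.lintegral_indicator_one (hBZmeas.preimage (hMP ε).measurable)]
      · intro ε _
        exact measurable_one.indicator (hBZmeas.preimage (hMP ε).measurable)
    have h3 : ∀ ζ, (∑ ε : Fin m → Bool, (T ε ⁻¹' BZ).indicator (1 : (Fin m → X × X) → ℝ≥0∞) ζ)
        ≤ ENNReal.ofReal ((Kc : ℝ) * (2 ^ m * Real.exp (-(m : ℝ) * η ^ 2 / 8))) := by
      intro ζ
      have hind : (∑ ε : Fin m → Bool, (T ε ⁻¹' BZ).indicator (1 : (Fin m → X × X) → ℝ≥0∞) ζ)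
          = ((Finset.univ.filter fun ε : Fin m → Bool => T ε ζ ∈ BZ).card : ℝ≥0∞) := by
        rw [Finset.card_filter]
        push_cast
        apply Finset.sum_congr rfl
        intro ε _
        rw [Set.indicator_apply]
        by_cases hm : T ε ζ ∈ BZ <;> simp [hm]
      rw [hind]
      have := hpoint ζ
      calc ((Finset.univ.filter fun ε : Fin m → Bool => T ε ζ ∈ BZ).card : ℝ≥0∞)
          = ENNReal.ofReal
            (((Finset.univ.filter fun ε : Fin m → Bool => T ε ζ ∈ BZ).card : ℝ)) := by
            rw [ENNReal.ofReal_natCast]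
        _ ≤ ENNReal.ofReal ((Kc : ℝ) * (2 ^ m * Real.exp (-(m : ℝ) * η ^ 2 / 8))) :=
            ENNReal.ofReal_le_ofReal (hpoint ζ)
    calc (2 ^ m : ℝ≥0∞) * ν BZ
        = ∫⁻ ζ, (∑ ε : Fin m → Bool, (T ε ⁻¹' BZ).indicator (1 : (Fin m → X × X) → ℝ≥0∞) ζ) ∂ν := by
          rw [h1, h2]
      _ ≤ ∫⁻ _x, ENNReal.ofReal ((Kc : ℝ) * (2 ^ m * Real.exp (-(m : ℝ) * η ^ 2 / 8))) ∂ν :=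
          MeasureTheory.lintegral_mono h3
      _ = ENNReal.ofReal ((Kc : ℝ) * (2 ^ m * Real.exp (-(m : ℝ) * η ^ 2 / 8))) := by
          rw [MeasureTheory.lintegral_const, measure_univ, mul_one]
  -- cancel the factor 2^m
  have hofr : ENNReal.ofReal ((Kc : ℝ) * (2 ^ m * Real.exp (-(m : ℝ) * η ^ 2 / 8)))
      = (2 ^ m : ℝ≥0∞) * ENNReal.ofReal ((Kc : ℝ) * Real.exp (-(m : ℝ) * η ^ 2 / 8)) := by
    have hre : (Kc : ℝ) * (2 ^ m * Real.exp (-(m : ℝ) * η ^ 2 / 8))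
        = (2:ℝ) ^ m * ((Kc : ℝ) * Real.exp (-(m : ℝ) * η ^ 2 / 8)) := by ring
    rw [hre, ENNReal.ofReal_mul (by positivity)]
    congr 1
    rw [ENNReal.ofReal_pow (by norm_num)]
    norm_num
  rw [hofr] at hkey
  have h2m0 : (2 ^ m : ℝ≥0∞) ≠ 0 := by positivity
  have h2mtop : (2 ^ m : ℝ≥0∞) ≠ ⊤ := by
    exact ENNReal.pow_ne_top (by norm_num)
  exact (ENNReal.mul_le_mul_iff_right h2m0 h2mtop).mp hkey
end

lemma card_filter_mem_setOf {X : Type*} {m : ℕ} (P : X → Prop) (ω : Fin m → X)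
    [DecidablePred fun i : Fin m => ω i ∈ {z | P z}]
    [DecidablePred fun i : Fin m => P (ω i)] :
    (Finset.univ.filter fun i : Fin m => ω i ∈ {z | P z}).card
      = (Finset.univ.filter fun i : Fin m => P (ω i)).card :=
  congrArg Finset.card (Finset.filter_congr fun i _ => Iff.rfl)

set_option maxHeartbeats 2000000 in
/-- VC uniform-convergence bound (Theorem 2.5 in Schapire–Freund): for a
countable class `H` of measurable `±1`-valued hypotheses of VC dimension
`d ≥ 1`, a target `f`, a distribution `D`, `η > 0` and sample size `m ≥ d`, the
probability over an i.i.d. sample `S ∼ D^m` that some `h ∈ H` has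
`err(h,f,D) > êrr(h,S) + η` is at most `8(em/d)^d · exp(−mη²/32)`. -/
theorem vc_uniform_convergence
    {X : Type*} [MeasurableSpace X] (D : Measure X) [IsProbabilityMeasure D]
    (f : X → ℝ) (hf : Measurable f) (hfval : ∀ z, f z = 1 ∨ f z = -1)
    (H : Set (X → ℝ)) (hHcount : H.Countable)
    (hHmeas : ∀ h ∈ H, Measurable h)
    (hHval : ∀ h ∈ H, ∀ z, h z = 1 ∨ h z = -1)
    (d : ℕ) (hd : 1 ≤ d)
    (hVCle : ∀ S : Finset X, Shatters H S → S.card ≤ d)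
    (hVCge : ∃ S : Finset X, Shatters H S ∧ S.card = d)
    (η : ℝ) (hη : 0 < η) (m : ℕ) (hm : d ≤ m) :
    ((Measure.pi fun _ : Fin m => D)
        {ω : Fin m → X | ∃ h ∈ H,
          (D {z | h z ≠ f z}).toReal >
            ((Finset.univ.filter fun i => h (ω i) ≠ f (ω i)).card : ℝ) / m + η}
      ).toReal
      ≤ 8 * (Real.exp 1 * m / d) ^ d * Real.exp (-(m : ℝ) * η ^ 2 / 32) := by
  
  set μ1 := (Measure.pi fun _ : Fin m => D) with hμ1
  haveI : IsProbabilityMeasure μ1 := by rw [hμ1]; infer_instance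
  set A := {ω : Fin m → X | ∃ h ∈ H,
          (D {z | h z ≠ f z}).toReal >
            ((Finset.univ.filter fun i => h (ω i) ≠ f (ω i)).card : ℝ) / m + η} with hA
  -- trivial case: RHS ≥ 1
  by_cases htriv : 1 ≤ 8 * (Real.exp 1 * m / d) ^ d * Real.exp (-(m : ℝ) * η ^ 2 / 32)
  · have h1 : (μ1 A).toReal ≤ 1 := by
      have := prob_le_one (μ := μ1) (s := A)
      exact ENNReal.toReal_le_of_le_ofReal zero_le_one (by simpa using this)
    linarith
  push_neg at htriv
  -- derive m η² > 32 (d + 2)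
  have hm1 : 1 ≤ m := hd.trans hm
  have hm0 : (0:ℝ) < m := by exact_mod_cast hm1
  have hd0 : (0:ℝ) < d := by exact_mod_cast hd
  have hmd : (d:ℝ) ≤ (m:ℝ) := by exact_mod_cast hm
  have hbase : Real.exp 1 ≤ Real.exp 1 * m / d := by
    rw [mul_div_assoc]
    nlinarith [Real.exp_pos 1, (one_le_div hd0).mpr hmd]
  have hpow : Real.exp (d:ℝ) ≤ (Real.exp 1 * m / d) ^ d := by
    have h1 : Real.exp (d:ℝ) = (Real.exp 1) ^ d := by
      rw [← Real.exp_nat_mul]; norm_num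
    rw [h1]
    exact pow_le_pow_left₀ (Real.exp_pos 1).le hbase d
  have hxgt : (d:ℝ) + 2 < (m:ℝ) * η ^ 2 / 32 := by
    by_contra hcon
    push_neg at hcon
    have h2 : Real.exp ((d:ℝ) + (-(m:ℝ) * η ^ 2 / 32)) ≥ Real.exp (-2 : ℝ) := by
      apply Real.exp_le_exp.mpr
      linarith
    have h3 : Real.exp ((d:ℝ) + (-(m:ℝ) * η ^ 2 / 32))
        = Real.exp (d:ℝ) * Real.exp (-(m:ℝ) * η ^ 2 / 32) := Real.exp_add _ _
    have h4 : Real.exp 2 < 8 := by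
      have he1 : Real.exp 1 < 2.7182818286 := Real.exp_one_lt_d9
      have h5 : Real.exp 2 = Real.exp 1 * Real.exp 1 := by
        rw [← Real.exp_add]; norm_num
      nlinarith [Real.exp_pos 1]
    have h6 : (8:ℝ)⁻¹ < Real.exp (-2:ℝ) := by
      rw [Real.exp_neg]
      exact inv_strictAnti₀ (by positivity) h4
    have h7 : Real.exp (d:ℝ) * Real.exp (-(m:ℝ) * η ^ 2 / 32)
        ≤ (Real.exp 1 * m / d) ^ d * Real.exp (-(m:ℝ) * η ^ 2 / 32) :=
      mul_le_mul_of_nonneg_right hpow (Real.exp_pos _).le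
    nlinarith [Real.exp_pos (-(m:ℝ) * η ^ 2 / 32)]
  have hx0 : (0:ℝ) ≤ (m:ℝ) * η ^ 2 := by positivity
  have hmη32 : (32:ℝ) ≤ (m:ℝ) * η ^ 2 := by nlinarith
  -- key exponent comparison
  have hkey2 : 2 * (2:ℝ) ^ d * Real.exp (-(m:ℝ) * η ^ 2 / 8)
      ≤ 8 * Real.exp (-(m:ℝ) * η ^ 2 / 32) := by
    have h2d : (2:ℝ) ^ d ≤ Real.exp (3 * ((m:ℝ) * η ^ 2) / 32) := by
      calc (2:ℝ) ^ d ≤ (Real.exp 1) ^ d := by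
            apply pow_le_pow_left₀ (by norm_num)
            nlinarith [Real.exp_one_gt_d9]
        _ = Real.exp (d:ℝ) := by rw [← Real.exp_nat_mul]; norm_num
        _ ≤ Real.exp (3 * ((m:ℝ) * η ^ 2) / 32) := by
            apply Real.exp_le_exp.mpr
            nlinarith
    calc 2 * (2:ℝ) ^ d * Real.exp (-(m:ℝ) * η ^ 2 / 8)
        ≤ 2 * Real.exp (3 * ((m:ℝ) * η ^ 2) / 32) * Real.exp (-(m:ℝ) * η ^ 2 / 8) := by
          apply mul_le_mul_of_nonneg_right _ (Real.exp_pos _).le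
          nlinarith
      _ = 2 * Real.exp (3 * ((m:ℝ) * η ^ 2) / 32 + -(m:ℝ) * η ^ 2 / 8) := by
          rw [mul_assoc, ← Real.exp_add]
      _ = 2 * Real.exp (-(m:ℝ) * η ^ 2 / 32) := by
          rw [show 3 * ((m:ℝ) * η ^ 2) / 32 + -(m:ℝ) * η ^ 2 / 8
            = -(m:ℝ) * η ^ 2 / 32 by ring]
      _ ≤ 8 * Real.exp (-(m:ℝ) * η ^ 2 / 32) := by
          nlinarith [Real.exp_pos (-(m:ℝ) * η ^ 2 / 32)]
  -- empty H case
  rcases H.eq_empty_or_nonempty with hHe | hHne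
  · have hAe : A = ∅ := by rw [hA]; ext ω; simp [hHe]
    rw [hAe]
    simp only [measure_empty, ENNReal.toReal_zero]
    positivity
  obtain ⟨e, he⟩ := Set.Countable.exists_eq_range hHcount hHne
  have heH : ∀ n, e n ∈ H := by intro n; rw [he]; exact Set.mem_range_self n
  -- measurability infrastructure
  have hEmeas : ∀ h ∈ H, MeasurableSet {z | h z ≠ f z} := by
    intro h hh
    have : {z | h z ≠ f z} = {z | h z = f z}ᶜ := by ext z; simp
    rw [this]
    exact (measurableSet_eq_fun (hHmeas h hh) hf).compl
  have hcmeas : ∀ h ∈ H, Measurable (fun ω : Fin m → X =>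
      ((Finset.univ.filter fun i => h (ω i) ≠ f (ω i)).card : ℝ)) := by
    intro h hh
    have heq : (fun ω : Fin m → X =>
        ((Finset.univ.filter fun i => h (ω i) ≠ f (ω i)).card : ℝ))
        = fun ω => ∑ i, if h (ω i) ≠ f (ω i) then (1:ℝ) else 0 := by
      ext ω; rw [Finset.card_filter]; push_cast; rfl
    rw [heq]
    apply Finset.measurable_sum
    intro i _
    have hms : MeasurableSet ((fun a : Fin m → X => a i) ⁻¹' {z | h z ≠ f z}) :=
      (measurable_pi_apply i) (hEmeas h hh)
    exact Measurable.ite hms measurable_const measurable_const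
  -- the events
  set S : ℕ → Set (Fin m → X) := fun n => {ω : Fin m → X |
      ((Finset.univ.filter fun i => e n (ω i) ≠ f (ω i)).card : ℝ) / m + η
        < (D {z | e n z ≠ f z}).toReal} with hS
  have hSmeas : ∀ n, MeasurableSet (S n) := by
    intro n
    exact measurableSet_lt
      (((hcmeas (e n) (heH n)).div_const _).add_const _) measurable_const
  have hAeq : A = ⋃ n, S n := by
    rw [hA, hS]
    ext ω
    simp only [Set.mem_setOf_eq, Set.mem_iUnion, he, Set.mem_range, gt_iff_lt]
    constructor
    · rintro ⟨h, ⟨n, rfl⟩, hcond⟩; exact ⟨n, hcond⟩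
    · rintro ⟨n, hcond⟩; exact ⟨e n, ⟨n, rfl⟩, hcond⟩
  set G : ℕ → Set (Fin m → X) := fun n => {ω : Fin m → X |
      (D {z | e n z ≠ f z}).toReal - η / 2
        ≤ ((Finset.univ.filter fun i => e n (ω i) ≠ f (ω i)).card : ℝ) / m} with hG
  have hGmeas : ∀ n, MeasurableSet (G n) := by
    intro n
    exact measurableSet_le measurable_const ((hcmeas (e n) (heH n)).div_const _)
  -- Chebyshev: μ1 (G n) ≥ 1/2
  have hGhalf : ∀ n, (1:ℝ≥0∞)/2 ≤ μ1 (G n) := by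
    intro n
    have hchev := chebyshev_count D {z | e n z ≠ f z} (hEmeas (e n) (heH n)) m
      ((m:ℝ) * η / 2) (by positivity)
    have hbd : (m : ℝ) / (4 * ((m:ℝ) * η / 2) ^ 2) ≤ 1/2 := by
      rw [div_le_iff₀ (by positivity)]
      have : (4:ℝ) * ((m:ℝ) * η / 2) ^ 2 = (m:ℝ) * ((m:ℝ) * η^2) := by ring
      rw [this]
      nlinarith
    have hGc : μ1 ((G n)ᶜ) ≤ 1/2 := by
      have h1 : (μ1 ((G n)ᶜ)).toReal ≤ 1/2 := by
        refine le_trans (ENNReal.toReal_mono (measure_ne_top _ _)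
          (measure_mono ?_)) (le_trans hchev hbd)
        intro ω hω
        simp only [Set.mem_compl_iff, hG, Set.mem_setOf_eq, not_le,
          Finset.filter_congr_decidable] at hω
        simp only [card_filter_mem_setOf]
        simp only [Set.mem_setOf_eq, Finset.filter_congr_decidable]
        have h2 := (mul_lt_mul_iff_right₀ hm0).mpr hω
        rw [mul_div_cancel₀ _ (ne_of_gt hm0), mul_sub] at h2
        linarith
      calc μ1 ((G n)ᶜ) = ENNReal.ofReal ((μ1 ((G n)ᶜ)).toReal) :=
            (ENNReal.ofReal_toReal (measure_ne_top _ _)).symm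
        _ ≤ ENNReal.ofReal (1/2 : ℝ) := ENNReal.ofReal_le_ofReal h1
        _ = 1/2 := by
            rw [ENNReal.ofReal_div_of_pos (by norm_num), ENNReal.ofReal_one,
              ENNReal.ofReal_ofNat]
    have huni : (1:ℝ≥0∞) ≤ μ1 (G n) + μ1 ((G n)ᶜ) := by
      rw [← measure_univ (μ := μ1), ← Set.union_compl_self (G n)]
      exact measure_union_le _ _
    have h2 : (1:ℝ≥0∞) ≤ μ1 (G n) + 1/2 := huni.trans (add_le_add_right hGc _)
    have h3 : (1:ℝ≥0∞) - 1/2 ≤ μ1 (G n) := by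
      rw [tsub_le_iff_right]
      exact h2
    calc (1:ℝ≥0∞)/2 = 1 - 1/2 := by
          rw [ENNReal.sub_half (by norm_num)]
      _ ≤ μ1 (G n) := h3
  -- the double-sample event
  set B : Set ((Fin m → X) × (Fin m → X)) := {σ | ∃ h ∈ H,
      ((Finset.univ.filter fun i => h (σ.1 i) ≠ f (σ.1 i)).card : ℝ) / m + η / 2
        < ((Finset.univ.filter fun i => h (σ.2 i) ≠ f (σ.2 i)).card : ℝ) / m} with hB
  have hBmeas : MeasurableSet B := by
    have hBeq : B = ⋃ n, {σ : (Fin m → X) × (Fin m → X) |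
        ((Finset.univ.filter fun i => e n (σ.1 i) ≠ f (σ.1 i)).card : ℝ) / m + η / 2
          < ((Finset.univ.filter fun i => e n (σ.2 i) ≠ f (σ.2 i)).card : ℝ) / m} := by
      rw [hB]
      ext σ
      simp only [Set.mem_setOf_eq, Set.mem_iUnion, he, Set.mem_range]
      constructor
      · rintro ⟨h, ⟨n, rfl⟩, hcond⟩; exact ⟨n, hcond⟩
      · rintro ⟨n, hcond⟩; exact ⟨e n, ⟨n, rfl⟩, hcond⟩
    rw [hBeq]
    apply MeasurableSet.iUnion
    intro n
    exact measurableSet_lt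
      (((((hcmeas (e n) (heH n))).comp measurable_fst).div_const _).add_const _)
      (((hcmeas (e n) (heH n)).comp measurable_snd).div_const _)
  -- symmetrization
  set μ2 := μ1.prod μ1 with hμ2
  have hsubB : ∀ n, (disjointed S n) ×ˢ (G n) ⊆ B := by
    intro n σ hσ
    obtain ⟨hσ1, hσ2⟩ := hσ
    have hP : σ.1 ∈ S n := disjointed_subset S n hσ1
    rw [hS] at hP
    rw [hG] at hσ2
    simp only [Set.mem_setOf_eq] at hP hσ2
    rw [hB]
    refine ⟨e n, heH n, ?_⟩
    linarith
  have hmeasAnGn : ∀ n, MeasurableSet ((disjointed S n) ×ˢ (G n)) := by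
    intro n
    exact (MeasurableSet.disjointed hSmeas n).prod (hGmeas n)
  have hdisjprod : Pairwise (Function.onFun Disjoint
      (fun n => (disjointed S n) ×ˢ (G n))) := by
    intro a b hab
    exact Set.Disjoint.set_prod_left ((disjoint_disjointed S) hab) _ _
  have hchain : μ1 A * (1/2 : ℝ≥0∞) ≤ μ2 B := by
    calc μ1 A * (1/2 : ℝ≥0∞)
        = μ1 (⋃ n, disjointed S n) * (1/2) := by rw [hAeq, iUnion_disjointed]
      _ = (∑' n, μ1 (disjointed S n)) * (1/2) := by
          rw [measure_iUnion (disjoint_disjointed S) (MeasurableSet.disjointed hSmeas)]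
      _ = ∑' n, μ1 (disjointed S n) * (1/2) := ENNReal.tsum_mul_right.symm
      _ ≤ ∑' n, μ1 (disjointed S n) * μ1 (G n) := by
          apply ENNReal.tsum_le_tsum
          intro n
          exact mul_le_mul_right (hGhalf n) _
      _ = ∑' n, μ2 ((disjointed S n) ×ˢ (G n)) := by
          apply tsum_congr
          intro n
          rw [hμ2, Measure.prod_prod]
      _ = μ2 (⋃ n, (disjointed S n) ×ˢ (G n)) :=
          (measure_iUnion hdisjprod hmeasAnGn).symm
      _ ≤ μ2 B := measure_mono (Set.iUnion_subset hsubB)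
  -- transfer to the zipped space and apply swap_bound
  have hφ := measurePreserving_arrowProdEquivProdArrow X X (Fin m)
    (fun _ => D) (fun _ => D)
  have hμ2B : μ2 B = (Measure.pi fun _ : Fin m => D.prod D)
      ((MeasurableEquiv.arrowProdEquivProdArrow X X (Fin m)) ⁻¹' B) := by
    rw [hμ2, hμ1]
    exact (hφ.measure_preimage hBmeas.nullMeasurableSet).symm
  have hpreB : (MeasurableEquiv.arrowProdEquivProdArrow X X (Fin m)) ⁻¹' B
      = {ζ : Fin m → X × X | ∃ h ∈ H,
        ((Finset.univ.filter fun i => h ((ζ i).1) ≠ f ((ζ i).1)).card : ℝ) / m + η / 2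
          < ((Finset.univ.filter fun i => h ((ζ i).2) ≠ f ((ζ i).2)).card : ℝ) / m} := by
    ext ζ
    rfl
  have hswap := swap_bound D f hf hfval H hHcount hHmeas hHval d hVCle η hη m hm1
  have hfinal : μ1 A ≤ ENNReal.ofReal (2 * (((∑ k ∈ Finset.Iic d, (2 * m).choose k : ℕ) : ℝ)
      * Real.exp (-(m : ℝ) * η ^ 2 / 8))) := by
    have h1 : μ1 A ≤ 2 * μ2 B := by
      have h2 := mul_le_mul_left hchain 2
      have h3 : μ1 A * (1/2 : ℝ≥0∞) * 2 = μ1 A := by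
        rw [mul_assoc]
        rw [show (1/2 : ℝ≥0∞) * 2 = 1 by
          rw [ENNReal.div_mul_cancel (by norm_num) (by norm_num)]]
        rw [mul_one]
      rw [h3] at h2
      calc μ1 A ≤ μ2 B * 2 := h2
        _ = 2 * μ2 B := mul_comm _ _
    calc μ1 A ≤ 2 * μ2 B := h1
      _ = 2 * (Measure.pi fun _ : Fin m => D.prod D)
          ((MeasurableEquiv.arrowProdEquivProdArrow X X (Fin m)) ⁻¹' B) := by rw [hμ2B]
      _ ≤ 2 * ENNReal.ofReal (((∑ k ∈ Finset.Iic d, (2 * m).choose k : ℕ) : ℝ)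
          * Real.exp (-(m : ℝ) * η ^ 2 / 8)) := by
          apply mul_le_mul_right
          rw [hpreB]
          exact hswap
      _ = ENNReal.ofReal (2 * (((∑ k ∈ Finset.Iic d, (2 * m).choose k : ℕ) : ℝ)
          * Real.exp (-(m : ℝ) * η ^ 2 / 8))) := by
          rw [ENNReal.ofReal_mul (by norm_num : (0:ℝ) ≤ 2)]
          congr 1
          rw [ENNReal.ofReal_ofNat]
  -- final real computation
  have hreal : 2 * (((∑ k ∈ Finset.Iic d, (2 * m).choose k : ℕ) : ℝ)
      * Real.exp (-(m : ℝ) * η ^ 2 / 8))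
      ≤ 8 * (Real.exp 1 * m / d) ^ d * Real.exp (-(m : ℝ) * η ^ 2 / 32) := by
    have hKb : ((∑ k ∈ Finset.Iic d, (2 * m).choose k : ℕ) : ℝ)
        ≤ 2 ^ d * (Real.exp 1 * m / d) ^ d := by
      have h1 := binom_sum_le d (2 * m) hd (by omega)
      have h2 : (Real.exp 1 * (2 * m : ℕ) / d) ^ d
          = 2 ^ d * (Real.exp 1 * m / d) ^ d := by
        rw [← mul_pow]
        congr 1
        push_cast
        ring
      rw [h2] at h1
      exact h1
    have hpos : (0:ℝ) ≤ (Real.exp 1 * m / d) ^ d := by positivity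
    calc 2 * (((∑ k ∈ Finset.Iic d, (2 * m).choose k : ℕ) : ℝ)
        * Real.exp (-(m : ℝ) * η ^ 2 / 8))
        ≤ 2 * ((2 ^ d * (Real.exp 1 * m / d) ^ d) * Real.exp (-(m : ℝ) * η ^ 2 / 8)) := by
          have := mul_le_mul_of_nonneg_right hKb (Real.exp_pos (-(m : ℝ) * η ^ 2 / 8)).le
          nlinarith
      _ = (2 * 2 ^ d * Real.exp (-(m : ℝ) * η ^ 2 / 8)) * (Real.exp 1 * m / d) ^ d := by
          ring
      _ ≤ (8 * Real.exp (-(m : ℝ) * η ^ 2 / 32)) * (Real.exp 1 * m / d) ^ d :=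
          mul_le_mul_of_nonneg_right hkey2 hpos
      _ = 8 * (Real.exp 1 * m / d) ^ d * Real.exp (-(m : ℝ) * η ^ 2 / 32) := by ring
  exact ENNReal.toReal_le_of_le_ofReal (by positivity)
    (hfinal.trans (ENNReal.ofReal_le_ofReal hreal))
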